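/- Let C be a proper positive cone in a finite-dimensional real inner product space V and let u ∈ C. Then u lies in the topological interior of C if and only if for every x ∈ V there exists a natural number n such that n•u − x ∈ C. -/
import Mathlib


open Pointwise

theorem stmt_0 {V : Type*} [NormedAddCommGroup V] [InnerProductSpace ℝ V]
    [FiniteDimensional ℝ V] (C : Set V)
    (hclosed : IsClosed C) (hconvex : Convex ℝ C)
    (hint : (interior C).Nonempty)
    (hsmul : ∀ (r : ℝ), 0 ≤ r → ∀ x ∈ C, r • x ∈ C)
    (hproper : C ∩ (-C) = {0})
    (u : V) (hu : u ∈ C) :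
    u ∈ interior C ↔ ∀ x : V, ∃ n : ℕ, (n : ℝ) • u - x ∈ C := by
  have hadd : ∀ a ∈ C, ∀ b ∈ C, a + b ∈ C := by
    intro a ha b hb
    have h1 := hconvex ha hb (by norm_num : (0:ℝ) ≤ 1/2) (by norm_num : (0:ℝ) ≤ 1/2)
      (by norm_num)
    have h2 := hsmul 2 (by norm_num) _ h1
    have : (2:ℝ) • ((1/2 : ℝ) • a + (1/2 : ℝ) • b) = a + b := by
      rw [smul_add, smul_smul, smul_smul]; norm_num
    rwa [this] at h2
  constructor
  · intro hiu x
    rw [mem_interior_iff_mem_nhds, Metric.mem_nhds_iff] at hiu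
    obtain ⟨ε, hε, hball⟩ := hiu
    obtain ⟨n, hn⟩ := exists_nat_gt (‖x‖ / ε)
    have hn0 : (0:ℝ) < n := lt_of_le_of_lt (div_nonneg (norm_nonneg x) hε.le) hn
    refine ⟨n, ?_⟩
    have h1 : u - (n:ℝ)⁻¹ • x ∈ Metric.ball u ε := by
      rw [Metric.mem_ball, dist_eq_norm]
      have : u - (n:ℝ)⁻¹ • x - u = -((n:ℝ)⁻¹ • x) := by abel
      rw [this, norm_neg, norm_smul, norm_inv, Real.norm_natCast]
      rw [div_lt_iff₀ hε] at hn
      calc ((n:ℝ))⁻¹ * ‖x‖ = ‖x‖ / n := by rw [div_eq_inv_mul]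
        _ < ε := by rw [div_lt_iff₀ hn0, mul_comm]; exact hn
    have h2 := hsmul n hn0.le _ (hball h1)
    have h3 : (n:ℝ) • (u - (n:ℝ)⁻¹ • x) = (n:ℝ) • u - x := by
      rw [smul_sub, smul_inv_smul₀ (ne_of_gt hn0)]
    rwa [h3] at h2
  · intro h
    obtain ⟨w, hw⟩ := hint
    rw [mem_interior_iff_mem_nhds, Metric.mem_nhds_iff] at hw
    obtain ⟨ε, hε, hball⟩ := hw
    obtain ⟨n, hn⟩ := h w
    have hballn : Metric.ball ((n:ℝ) • u) ε ⊆ C := by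
      intro y hy
      have hmem : y - ((n:ℝ) • u - w) ∈ Metric.ball w ε := by
        rw [Metric.mem_ball, dist_eq_norm] at hy ⊢
        have : y - ((n:ℝ) • u - w) - w = y - (n:ℝ) • u := by abel
        rw [this]; exact hy
      have := hadd _ hn _ (hball hmem)
      have heq : (n:ℝ) • u - w + (y - ((n:ℝ) • u - w)) = y := by abel
      rwa [heq] at this
    rcases Nat.eq_zero_or_pos n with h0 | hpos
    · -- ball 0 ε ⊆ C, so C = univ
      subst h0
      have hb0 : Metric.ball (0:V) ε ⊆ C := by simpa using hballn
      have hCuniv : C = Set.univ := by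
        ext v
        simp only [Set.mem_univ, iff_true]
        rcases eq_or_ne v 0 with rfl | hv
        · exact hb0 (by simp [hε])
        · have hvn : (0:ℝ) < ‖v‖ := norm_pos_iff.mpr hv
          set r : ℝ := ε / (2 * ‖v‖) with hr
          have hr0 : 0 < r := by positivity
          have hrv : r • v ∈ Metric.ball (0:V) ε := by
            rw [Metric.mem_ball, dist_zero_right, norm_smul, Real.norm_of_nonneg hr0.le]
            rw [hr, div_mul_eq_mul_div, mul_comm]
            rw [div_lt_iff₀ (by positivity)]
            nlinarith
          have := hsmul r⁻¹ (by positivity) _ (hb0 hrv)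
          rwa [inv_smul_smul₀ (ne_of_gt hr0)] at this
      rw [hCuniv]; simp
    · have hn0 : (0:ℝ) < n := by exact_mod_cast hpos
      rw [mem_interior_iff_mem_nhds, Metric.mem_nhds_iff]
      refine ⟨ε / n, by positivity, ?_⟩
      intro y hy
      have hny : (n:ℝ) • y ∈ Metric.ball ((n:ℝ) • u) ε := by
        rw [Metric.mem_ball, dist_eq_norm] at hy ⊢
        rw [← smul_sub, norm_smul, Real.norm_natCast]
        rw [lt_div_iff₀ hn0] at hy
        linarith [hy]
      have := hsmul (n:ℝ)⁻¹ (by positivity) _ (hballn hny)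
      rwa [inv_smul_smul₀ (ne_of_gt hn0)] at this
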